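/- arXiv:1508.03939 — 4 statements merged into one kernel-verified Lean document; each statement's English description precedes it below -/
import Mathlib

section
/- Let F be an algebraically closed field of characteristic zero and let L_1, L_2 be finite-dimensional semisimple Lie algebras over F. Then every local derivation Δ on the direct sum L = L_1 ⊕ L_2 decomposes as Δ = Δ_1 ⊕ Δ_2, i.e. Δ(x_1, x_2) = (Δ_1(x_1), Δ_2(x_2)) for all x_1 ∈ L_1, x_2 ∈ L_2, where Δ_i is a local derivation on L_i for i = 1, 2. -/
section ProdLie

variable (F : Type*) [Field F]
variable (L₁ L₂ : Type*) [LieRing L₁] [LieRing L₂]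

/-- The componentwise Lie bracket on the direct sum `L₁ ⊕ L₂`. -/
instance Prod.instLieRing : LieRing (L₁ × L₂) where
  bracket x y := (⁅x.1, y.1⁆, ⁅x.2, y.2⁆)
  add_lie x y z := by
    show (⁅(x + y).1, z.1⁆, ⁅(x + y).2, z.2⁆)
        = (⁅x.1, z.1⁆, ⁅x.2, z.2⁆) + (⁅y.1, z.1⁆, ⁅y.2, z.2⁆)
    simp [add_lie]
  lie_add x y z := by
    show (⁅x.1, (y + z).1⁆, ⁅x.2, (y + z).2⁆)
        = (⁅x.1, y.1⁆, ⁅x.2, y.2⁆) + (⁅x.1, z.1⁆, ⁅x.2, z.2⁆)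
    simp [lie_add]
  lie_self x := by
    show (⁅x.1, x.1⁆, ⁅x.2, x.2⁆) = (0 : L₁ × L₂)
    simp
  leibniz_lie x y z := by
    show (⁅x.1, ⁅y.1, z.1⁆⁆, ⁅x.2, ⁅y.2, z.2⁆⁆)
        = (⁅⁅x.1, y.1⁆, z.1⁆, ⁅⁅x.2, y.2⁆, z.2⁆) + (⁅y.1, ⁅x.1, z.1⁆⁆, ⁅y.2, ⁅x.2, z.2⁆⁆)
    exact Prod.ext (leibniz_lie x.1 y.1 z.1) (leibniz_lie x.2 y.2 z.2)

variable [LieAlgebra F L₁] [LieAlgebra F L₂]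

/-- The direct sum of two Lie algebras is a Lie algebra with componentwise operations. -/
instance Prod.instLieAlgebra : LieAlgebra F (L₁ × L₂) where
  lie_smul t x y := by
    show (⁅x.1, (t • y).1⁆, ⁅x.2, (t • y).2⁆) = t • (⁅x.1, y.1⁆, ⁅x.2, y.2⁆)
    simp [lie_smul]

end ProdLie

section Aux

variable {F : Type*} [Field F]
variable {L₁ L₂ : Type*} [LieRing L₁] [LieRing L₂]
variable [LieAlgebra F L₁] [LieAlgebra F L₂]

@[simp] lemma prod_bracket (x y : L₁ × L₂) : ⁅x, y⁆ = (⁅x.1, y.1⁆, ⁅x.2, y.2⁆) := rfl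

/-- For any derivation of a product with `L₂` having trivial center,
the second component of `D (x, 0)` vanishes. -/
lemma deriv_snd_inl_eq_zero [LieAlgebra.HasTrivialRadical F L₂]
    (D : LieDerivation F (L₁ × L₂) (L₁ × L₂)) (x : L₁) : (D (x, 0)).2 = 0 := by
  have hc : ∀ z : L₂, ⁅z, (D (x, 0)).2⁆ = 0 := by
    intro z
    have h0 : (⁅((x : L₁), (0 : L₂)), ((0 : L₁), z)⁆ : L₁ × L₂) = 0 := by
      simp
    have := D.apply_lie_eq_add ((x : L₁), (0 : L₂)) ((0 : L₁), z)
    rw [h0, map_zero] at this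
    have h2 := congrArg Prod.snd this
    simp at h2
    rw [← lie_skew, ← h2, neg_zero]
  have : (D (x, 0)).2 ∈ LieAlgebra.center F L₂ :=
    (LieModule.mem_maxTrivSubmodule F L₂ L₂ _).mpr hc
  rwa [LieAlgebra.center_eq_bot, LieSubmodule.mem_bot] at this

lemma deriv_fst_inr_eq_zero [LieAlgebra.HasTrivialRadical F L₁]
    (D : LieDerivation F (L₁ × L₂) (L₁ × L₂)) (y : L₂) : (D (0, y)).1 = 0 := by
  have hc : ∀ z : L₁, ⁅z, (D (0, y)).1⁆ = 0 := by
    intro z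
    have h0 : (⁅((0 : L₁), (y : L₂)), (z, (0 : L₂))⁆ : L₁ × L₂) = 0 := by
      simp
    have := D.apply_lie_eq_add ((0 : L₁), (y : L₂)) (z, (0 : L₂))
    rw [h0, map_zero] at this
    have h2 := congrArg Prod.fst this
    simp at h2
    rw [← lie_skew, ← h2, neg_zero]
  have : (D (0, y)).1 ∈ LieAlgebra.center F L₁ :=
    (LieModule.mem_maxTrivSubmodule F L₁ L₁ _).mpr hc
  rwa [LieAlgebra.center_eq_bot, LieSubmodule.mem_bot] at this

/-- Restriction of a derivation of the product to the first factor. -/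
def derivFst (D : LieDerivation F (L₁ × L₂) (L₁ × L₂)) : LieDerivation F L₁ L₁ where
  toLinearMap := (LinearMap.fst F L₁ L₂) ∘ₗ (D : (L₁ × L₂) →ₗ[F] (L₁ × L₂)) ∘ₗ (LinearMap.inl F L₁ L₂)
  leibniz' a b := by
    have := D.apply_lie_eq_sub ((a : L₁), (0 : L₂)) ((b : L₁), (0 : L₂))
    have h := congrArg Prod.fst this
    simpa using h

@[simp] lemma derivFst_apply (D : LieDerivation F (L₁ × L₂) (L₁ × L₂)) (a : L₁) :
    derivFst D a = (D (a, 0)).1 := rfl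

def derivSnd (D : LieDerivation F (L₁ × L₂) (L₁ × L₂)) : LieDerivation F L₂ L₂ where
  toLinearMap := (LinearMap.snd F L₁ L₂) ∘ₗ (D : (L₁ × L₂) →ₗ[F] (L₁ × L₂)) ∘ₗ (LinearMap.inr F L₁ L₂)
  leibniz' a b := by
    have := D.apply_lie_eq_sub ((0 : L₁), (a : L₂)) ((0 : L₁), (b : L₂))
    have h := congrArg Prod.snd this
    simpa using h

@[simp] lemma derivSnd_apply (D : LieDerivation F (L₁ × L₂) (L₁ × L₂)) (a : L₂) :
    derivSnd D a = (D (0, a)).2 := rfl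

end Aux

/-- Every local derivation `Δ` on a direct sum `L₁ ⊕ L₂` of two finite-dimensional
semisimple Lie algebras over an algebraically closed field of characteristic zero
decomposes as `Δ = Δ₁ ⊕ Δ₂`, where `Δᵢ` is a local derivation on `Lᵢ`. -/
theorem local_derivation_on_direct_sum_decomposes
    (F : Type*) [Field F] [IsAlgClosed F] [CharZero F]
    (L₁ L₂ : Type*) [LieRing L₁] [LieAlgebra F L₁] [LieRing L₂] [LieAlgebra F L₂]
    [FiniteDimensional F L₁] [FiniteDimensional F L₂]
    [LieAlgebra.HasTrivialRadical F L₁] [LieAlgebra.HasTrivialRadical F L₂]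
    (Δ : (L₁ × L₂) →ₗ[F] (L₁ × L₂))
    (hloc : ∀ x, ∃ D : LieDerivation F (L₁ × L₂) (L₁ × L₂), Δ x = D x) :
    ∃ (Δ₁ : L₁ →ₗ[F] L₁) (Δ₂ : L₂ →ₗ[F] L₂),
      (∀ x₁, ∃ D : LieDerivation F L₁ L₁, Δ₁ x₁ = D x₁) ∧
      (∀ x₂, ∃ D : LieDerivation F L₂ L₂, Δ₂ x₂ = D x₂) ∧
      (∀ x : L₁ × L₂, Δ x = (Δ₁ x.1, Δ₂ x.2)) := by
  refine ⟨(LinearMap.fst F L₁ L₂) ∘ₗ Δ ∘ₗ (LinearMap.inl F L₁ L₂),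
      (LinearMap.snd F L₁ L₂) ∘ₗ Δ ∘ₗ (LinearMap.inr F L₁ L₂), ?_, ?_, ?_⟩
  · intro x₁
    obtain ⟨D, hD⟩ := hloc (x₁, 0)
    exact ⟨derivFst D, by simp [hD]⟩
  · intro x₂
    obtain ⟨D, hD⟩ := hloc (0, x₂)
    exact ⟨derivSnd D, by simp [hD]⟩
  · intro x
    have h1 : (Δ (x.1, 0)).2 = 0 := by
      obtain ⟨D, hD⟩ := hloc (x.1, 0)
      rw [hD]; exact deriv_snd_inl_eq_zero D x.1
    have h2 : (Δ (0, x.2)).1 = 0 := by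
      obtain ⟨D, hD⟩ := hloc (0, x.2)
      rw [hD]; exact deriv_fst_inr_eq_zero D x.2
    have hx : x = (x.1, 0) + (0, x.2) := by simp
    rw [hx, map_add]
    ext <;> simp [h1, h2]
end

section
/- Let F be an algebraically closed field of characteristic zero and let L be a finite-dimensional filiform Lie algebra over F with dim L ≥ 3. Then L admits a local derivation which is not a derivation, i.e. there exists a linear map Δ : L → L such that for every x ∈ L there is a derivation D_x of L with Δ(x) = D_x(x), but Δ itself does not satisfy the Leibniz rule. -/
open Module LieModule LieSubmodule

/-- For a subspace `W` of a vector space and `c ∉ W`, there is a functional vanishing on `W`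
taking any prescribed value at `c`. -/
private lemma filiform_exists_functional {F V : Type*} [Field F] [AddCommGroup V] [Module F V]
    {W : Submodule F V} {c : V} (hc : c ∉ W) (κ : F) :
    ∃ f : V →ₗ[F] F, f c = κ ∧ ∀ w ∈ W, f w = 0 := by
  obtain ⟨f, hfc, hmap⟩ := W.exists_dual_map_eq_bot_of_notMem hc inferInstance
  refine ⟨(κ * (f c)⁻¹) • f, ?_, ?_⟩
  · rw [LinearMap.smul_apply, smul_eq_mul]
    field_simp
  · intro w hw
    have hfw : f w = 0 := by
      have : f w ∈ W.map f := Submodule.mem_map_of_mem hw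
      rwa [hmap, Submodule.mem_bot] at this
    rw [LinearMap.smul_apply, hfw, smul_zero]

/-- `⁅L^j, L^k⁆ ≤ L^(j+k+1)` for the lower central series of a Lie algebra. -/
private lemma filiform_lie_lcs_le (F L : Type*) [Field F] [LieRing L] [LieAlgebra F L] :
    ∀ j k : ℕ, ⁅lowerCentralSeries F L L j, lowerCentralSeries F L L k⁆ ≤
      lowerCentralSeries F L L (j + k + 1) := by
  intro j
  induction j with
  | zero =>
    intro k
    rw [LieModule.lowerCentralSeries_zero, show 0 + k + 1 = k + 1 by omega, LieModule.lowerCentralSeries_succ]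
  | succ j ih =>
    intro k
    rw [LieSubmodule.lie_le_iff]
    set S : LieSubmodule F L L :=
      { carrier := {x : L | ∀ m ∈ lowerCentralSeries F L L k,
          ⁅x, m⁆ ∈ lowerCentralSeries F L L (j + 1 + k + 1)},
        add_mem' := by
          intro p q hp hq m hm
          rw [add_lie]
          exact add_mem (hp m hm) (hq m hm)
        zero_mem' := by
          intro m hm
          rw [zero_lie]
          exact zero_mem _
        smul_mem' := by
          intro t p hp m hm
          rw [smul_lie]
          exact SMulMemClass.smul_mem t (hp m hm)
        lie_mem := by
          intro y p hp
          intro m hm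
          have h1 : ⁅y, ⁅p, m⁆⁆ ∈ lowerCentralSeries F L L (j + 1 + k + 1) :=
            (lowerCentralSeries F L L (j + 1 + k + 1)).lie_mem (hp m hm)
          have h2 : ⁅p, ⁅y, m⁆⁆ ∈ lowerCentralSeries F L L (j + 1 + k + 1) :=
            hp _ ((lowerCentralSeries F L L k).lie_mem hm)
          have hkey : ⁅⁅y, p⁆, m⁆ = ⁅y, ⁅p, m⁆⁆ - ⁅p, ⁅y, m⁆⁆ := by
            rw [leibniz_lie y p m]; abel
          rw [hkey]
          exact sub_mem h1 h2 }
    have hS : lowerCentralSeries F L L (j + 1) ≤ S := by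
      rw [LieModule.lowerCentralSeries_succ, LieSubmodule.lie_le_iff]
      intro y _ p hp
      intro m hm
      have hkey : ⁅⁅y, p⁆, m⁆ = ⁅y, ⁅p, m⁆⁆ - ⁅p, ⁅y, m⁆⁆ := by
        rw [leibniz_lie y p m]; abel
      rw [hkey]
      refine sub_mem ?_ ?_
      · have h1 : ⁅p, m⁆ ∈ lowerCentralSeries F L L (j + k + 1) :=
          ih k (LieSubmodule.lie_mem_lie hp hm)
        have h2 : ⁅y, ⁅p, m⁆⁆ ∈ ⁅(⊤ : LieIdeal F L), lowerCentralSeries F L L (j + k + 1)⁆ :=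
          LieSubmodule.lie_mem_lie (LieSubmodule.mem_top y) h1
        rw [← LieModule.lowerCentralSeries_succ] at h2
        rwa [show j + 1 + k + 1 = j + k + 1 + 1 by omega]
      · have h1 : ⁅y, m⁆ ∈ lowerCentralSeries F L L (k + 1) := by
          rw [LieModule.lowerCentralSeries_succ]
          exact LieSubmodule.lie_mem_lie (LieSubmodule.mem_top y) hm
        have h2 : ⁅p, ⁅y, m⁆⁆ ∈ lowerCentralSeries F L L (j + (k + 1) + 1) :=
          ih (k + 1) (LieSubmodule.lie_mem_lie hp h1)
        rwa [show j + 1 + k + 1 = j + (k + 1) + 1 by omega]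
    intro x hx m hm
    exact hS hx m hm

/-- Every finite-dimensional filiform Lie algebra `L` of dimension `n ≥ 3` over an
algebraically closed field of characteristic zero (filiform: the terms `L^k` of the lower
central series satisfy `dim L^k = n - k - 1` for `1 ≤ k ≤ n - 1`) admits a local
derivation which is not a derivation. -/
theorem filiform_admits_local_derivation_not_derivation
    (F : Type*) [Field F] [IsAlgClosed F] [CharZero F]
    (L : Type*) [LieRing L] [LieAlgebra F L] [FiniteDimensional F L]
    (n : ℕ) (hn : 3 ≤ n) (hdim : Module.finrank F L = n)
    (hfil : ∀ k : ℕ, 1 ≤ k → k ≤ n - 1 →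
      Module.finrank F ↥(LieModule.lowerCentralSeries F L L k) = n - k - 1) :
    ∃ Δ : L →ₗ[F] L,
      (∀ x : L, ∃ D : LieDerivation F L L, Δ x = D x) ∧
      ¬ (∀ x y : L, Δ ⁅x, y⁆ = ⁅Δ x, y⁆ + ⁅x, Δ y⁆) := by
  classical
  -- dimension facts
  have h1 : Module.finrank F ↥(lowerCentralSeries F L L 1) = n - 2 := by
    have := hfil 1 (by omega) (by omega)
    rwa [show n - 1 - 1 = n - 2 by omega] at this
  have h2 : Module.finrank F ↥(lowerCentralSeries F L L 2) = n - 3 := by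
    have := hfil 2 (by omega) (by omega)
    rwa [show n - 2 - 1 = n - 3 by omega] at this
  have hz1 : Module.finrank F ↥(lowerCentralSeries F L L (n - 2)) = 1 := by
    have := hfil (n - 2) (by omega) (by omega)
    rwa [show n - (n - 2) - 1 = 1 by omega] at this
  have hb0r : Module.finrank F ↥(lowerCentralSeries F L L (n - 1)) = 0 := by
    have := hfil (n - 1) (by omega) (by omega)
    rwa [show n - (n - 1) - 1 = 0 by omega] at this
  -- the top nonzero term is trivial
  have hbot : ∀ w ∈ lowerCentralSeries F L L (n - 1), w = (0 : L) := by
    intro w hw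
    by_contra hne
    have hpos : 0 < Module.finrank F ↥(lowerCentralSeries F L L (n - 1)) :=
      Module.finrank_pos_iff_exists_ne_zero.mpr
        ⟨⟨w, hw⟩, fun h => hne (congrArg Subtype.val h)⟩
    omega
  -- every bracket lies in L^1
  have hL1 : ∀ x y : L, ⁅x, y⁆ ∈ lowerCentralSeries F L L 1 := by
    intro x y
    rw [show (1 : ℕ) = 0 + 1 from rfl, LieModule.lowerCentralSeries_succ]
    exact LieSubmodule.lie_mem_lie (LieSubmodule.mem_top x)
      (by rw [LieModule.lowerCentralSeries_zero]; exact LieSubmodule.mem_top y)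
  -- brackets with L^1 lie in L^2
  have hlie2 : ∀ x w : L, w ∈ lowerCentralSeries F L L 1 →
      ⁅x, w⁆ ∈ lowerCentralSeries F L L 2 := by
    intro x w hw
    have := LieSubmodule.lie_mem_lie (LieSubmodule.mem_top x) hw
    rw [← LieModule.lowerCentralSeries_succ] at this
    rwa [show (2 : ℕ) = 1 + 1 from rfl]
  -- choose the generator z of L^(n-2)
  obtain ⟨z0, hz0ne, hz0span⟩ := finrank_eq_one_iff'.mp hz1
  set z : L := (z0 : L) with hzdef
  have hzmem : z ∈ lowerCentralSeries F L L (n - 2) := z0.2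
  have hzne : z ≠ 0 := fun h => hz0ne (Subtype.ext h)
  have hzspan : ∀ w ∈ lowerCentralSeries F L L (n - 2), ∃ c : F, w = c • z := by
    intro w hw
    obtain ⟨c, hc⟩ := hz0span ⟨w, hw⟩
    refine ⟨c, ?_⟩
    have hcc := congrArg Subtype.val hc
    simp only [SetLike.val_smul] at hcc
    exact hcc.symm
  -- z is central
  have hcent : ∀ x : L, ⁅x, z⁆ = 0 := by
    intro x
    have hmem : ⁅x, z⁆ ∈ ⁅(⊤ : LieIdeal F L), lowerCentralSeries F L L (n - 2)⁆ :=
      LieSubmodule.lie_mem_lie (LieSubmodule.mem_top x) hzmem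
    rw [← LieModule.lowerCentralSeries_succ] at hmem
    rw [show n - 2 + 1 = n - 1 by omega] at hmem
    exact hbot _ hmem
  -- choose v ∈ L^(n-3) which is not central
  obtain ⟨v, hvmem3, b0, hvb0⟩ :
      ∃ v, v ∈ lowerCentralSeries F L L (n - 3) ∧ ∃ b0 : L, ⁅v, b0⁆ ≠ 0 := by
    by_contra hcon
    push_neg at hcon
    have hzz : z ∈ (⊥ : LieSubmodule F L L) := by
      have e : n - 2 = (n - 3) + 1 := by omega
      have : lowerCentralSeries F L L (n - 2) = ⊥ := by
        rw [e, lowerCentralSeries_succ, LieSubmodule.lie_eq_bot_iff]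
        intro x _ m hm
        rw [← lie_skew, hcon m hm x, neg_zero]
      rw [← this]; exact hzmem
    rw [LieSubmodule.mem_bot] at hzz
    exact hzne hzz
  -- brackets of L^(n-3) with L^1 vanish
  have hvN1 : ∀ y ∈ lowerCentralSeries F L L 1, ⁅v, y⁆ = 0 := by
    intro y hy
    have := filiform_lie_lcs_le F L (n - 3) 1 (LieSubmodule.lie_mem_lie hvmem3 hy)
    rw [show n - 3 + 1 + 1 = n - 1 by omega] at this
    exact hbot _ this
  -- the coordinate functional on L^(n-2)
  obtain ⟨φz, hφzz, _⟩ :=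
    filiform_exists_functional (F := F) (W := (⊥ : Submodule F L)) (c := z)
      (by simpa using hzne) (1 : F)
  have hrep : ∀ w ∈ lowerCentralSeries F L L (n - 2), w = φz w • z := by
    intro w hw
    obtain ⟨c, hc⟩ := hzspan w hw
    rw [hc, map_smul, smul_eq_mul, hφzz, mul_one]
  -- λ : the z-coordinate of ⁅v, ·⁆
  set lam : L →ₗ[F] F := φz ∘ₗ LieAlgebra.ad F L v with hlamdef
  have hlam : ∀ y : L, ⁅v, y⁆ = lam y • z := by
    intro y
    have hmem : ⁅v, y⁆ ∈ lowerCentralSeries F L L (n - 2) := by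
      have h1 : ⁅y, v⁆ ∈ ⁅(⊤ : LieIdeal F L), lowerCentralSeries F L L (n - 3)⁆ :=
        LieSubmodule.lie_mem_lie (LieSubmodule.mem_top y) hvmem3
      rw [← LieModule.lowerCentralSeries_succ, show n - 3 + 1 = n - 2 by omega] at h1
      have := neg_mem h1
      rwa [lie_skew] at this
    have := hrep _ hmem
    rwa [show φz ⁅v, y⁆ = lam y from by simp [hlamdef]] at this
  have hlamN1 : ∀ y ∈ lowerCentralSeries F L L 1, lam y = 0 := by
    intro y hy
    have h0 := hlam y
    rw [hvN1 y hy] at h0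
    rcases smul_eq_zero.mp h0.symm with h | h
    · exact h
    · exact absurd h hzne
  have hκ : lam b0 ≠ 0 := by
    intro h
    exact hvb0 (by rw [hlam b0, h, zero_smul])
  have hb0n1 : b0 ∉ lowerCentralSeries F L L 1 := fun h => hvb0 (hvN1 b0 h)
  -- choose a ∉ L^1 ⊔ span{b0}
  have hb0ne : b0 ≠ 0 := by
    intro h
    exact hb0n1 (h ▸ zero_mem _)
  set W1 : Submodule F L :=
    (lowerCentralSeries F L L 1 : LieSubmodule F L L).toSubmodule ⊔ (F ∙ b0) with hW1def
  have hW1rank : Module.finrank F ↥W1 ≤ n - 1 := by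
    have hsum := Submodule.finrank_sup_add_finrank_inf_eq
      ((lowerCentralSeries F L L 1 : LieSubmodule F L L).toSubmodule) (F ∙ b0)
    have hspan : Module.finrank F ↥(F ∙ b0) = 1 := finrank_span_singleton hb0ne
    have hc1 : Module.finrank F
        ↥((lowerCentralSeries F L L 1 : LieSubmodule F L L).toSubmodule) = n - 2 := h1
    rw [hspan, hc1] at hsum
    rw [hW1def]
    omega
  obtain ⟨a, ha⟩ : ∃ a : L, a ∉ W1 := by
    by_contra hcon
    push_neg at hcon
    have : W1 = ⊤ := Submodule.eq_top_iff'.mpr hcon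
    rw [this] at hW1rank
    rw [finrank_top] at hW1rank
    omega
  -- the functional g
  obtain ⟨g, hga, hg0⟩ := filiform_exists_functional ha (1 : F)
  have hgN1 : ∀ w ∈ lowerCentralSeries F L L 1, g w = 0 := fun w hw =>
    hg0 w (Submodule.mem_sup_left ((LieSubmodule.mem_toSubmodule _).mpr hw))
  have hgb0 : g b0 = 0 :=
    hg0 b0 (Submodule.mem_sup_right (Submodule.mem_span_singleton_self b0))
  -- the functional β
  have hb0W2 : b0 ∉ (lowerCentralSeries F L L 1 : LieSubmodule F L L).toSubmodule ⊔ (F ∙ a) := by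
    intro hmem
    obtain ⟨l, hl, s, hs, hsum⟩ := Submodule.mem_sup.mp hmem
    obtain ⟨t, rfl⟩ := Submodule.mem_span_singleton.mp hs
    by_cases ht : t = 0
    · rw [ht, zero_smul, add_zero] at hsum
      exact hb0n1 (hsum ▸ (LieSubmodule.mem_toSubmodule _).mp hl)
    · apply ha
      have haeq : a = t⁻¹ • (b0 - l) := by
        rw [← hsum]
        rw [add_sub_cancel_left, smul_smul, inv_mul_cancel₀ ht, one_smul]
      rw [haeq]
      exact W1.smul_mem _ (W1.sub_mem
        (Submodule.mem_sup_right (Submodule.mem_span_singleton_self b0))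
        (Submodule.mem_sup_left hl))
  obtain ⟨bet, hbetb0, hbet0⟩ := filiform_exists_functional hb0W2 (1 : F)
  have hbetN1 : ∀ w ∈ lowerCentralSeries F L L 1, bet w = 0 := fun w hw =>
    hbet0 w (Submodule.mem_sup_left ((LieSubmodule.mem_toSubmodule _).mpr hw))
  have hbeta : bet a = 0 :=
    hbet0 a (Submodule.mem_sup_right (Submodule.mem_span_singleton_self a))
  -- decomposition: x - g x • a - bet x • b0 ∈ L^1
  have hdecomp : ∀ x : L, x - g x • a - bet x • b0 ∈ lowerCentralSeries F L L 1 := by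
    set P : L →ₗ[F] L := LinearMap.id - g.smulRight a - bet.smulRight b0 with hPdef
    have hPx : ∀ x : L, P x = x - g x • a - bet x • b0 := by
      intro x
      simp [hPdef]
    set S : Submodule F L :=
      Submodule.comap P (lowerCentralSeries F L L 1 : LieSubmodule F L L).toSubmodule with hSdef
    have hSN1 : (lowerCentralSeries F L L 1 : LieSubmodule F L L).toSubmodule ≤ S := by
      intro w hw
      have hw' : w ∈ lowerCentralSeries F L L 1 := (LieSubmodule.mem_toSubmodule _).mp hw
      simp only [hSdef, Submodule.mem_comap, hPx]
      rw [hgN1 w hw', hbetN1 w hw', zero_smul, zero_smul, sub_zero, sub_zero]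
      exact hw
    have haS : a ∈ S := by
      simp only [hSdef, Submodule.mem_comap, hPx]
      rw [hga, hbeta, one_smul, zero_smul, sub_zero, sub_self]
      exact zero_mem _
    have hb0S : b0 ∈ S := by
      simp only [hSdef, Submodule.mem_comap, hPx]
      rw [hgb0, hbetb0, one_smul, zero_smul, sub_zero, sub_self]
      exact zero_mem _
    have hlt1 : (lowerCentralSeries F L L 1 : LieSubmodule F L L).toSubmodule < W1 :=
      SetLike.lt_iff_le_and_exists.mpr ⟨le_sup_left, b0,
        Submodule.mem_sup_right (Submodule.mem_span_singleton_self b0),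
        fun h => hb0n1 ((LieSubmodule.mem_toSubmodule _).mp h)⟩
    have hlt2 : W1 < W1 ⊔ (F ∙ a) :=
      SetLike.lt_iff_le_and_exists.mpr ⟨le_sup_left, a,
        Submodule.mem_sup_right (Submodule.mem_span_singleton_self a), ha⟩
    have hf1 : n - 2 < Module.finrank F ↥W1 := by
      have := Submodule.finrank_lt_finrank_of_lt hlt1
      have hc1 : Module.finrank F
          ↥((lowerCentralSeries F L L 1 : LieSubmodule F L L).toSubmodule) = n - 2 := h1
      omega
    have hf2 : Module.finrank F ↥W1 < Module.finrank F ↥(W1 ⊔ (F ∙ a)) :=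
      Submodule.finrank_lt_finrank_of_lt hlt2
    have hf3 : Module.finrank F ↥(W1 ⊔ (F ∙ a)) ≤ n := by
      rw [← hdim]
      exact Submodule.finrank_le _
    have hM2top : W1 ⊔ (F ∙ a) = ⊤ := by
      apply Submodule.eq_top_of_finrank_eq
      rw [hdim]
      omega
    intro x
    have hxS : x ∈ S := by
      have hle : (⊤ : Submodule F L) ≤ S := by
        rw [← hM2top]
        refine sup_le (sup_le hSN1 ?_) ?_
        · rw [Submodule.span_singleton_le_iff_mem]; exact hb0S
        · rw [Submodule.span_singleton_le_iff_mem]; exact haS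
      exact hle trivial
    have := hxS
    simp only [hSdef, Submodule.mem_comap, hPx] at this
    exact (LieSubmodule.mem_toSubmodule _).mp this
  -- the key bracket expansion
  have hbra : ∀ x y : L, ⁅x, y⁆ - (g x * bet y - g y * bet x) • ⁅a, b0⁆ ∈
      lowerCentralSeries F L L 2 := by
    intro x y
    set lx : L := x - g x • a - bet x • b0 with hlxd
    set ly : L := y - g y • a - bet y • b0 with hlyd
    have hlx : lx ∈ lowerCentralSeries F L L 1 := hdecomp x
    have hly : ly ∈ lowerCentralSeries F L L 1 := hdecomp y
    have hx : x = g x • a + bet x • b0 + lx := by rw [hlxd]; abel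
    have hy : y = g y • a + bet y • b0 + ly := by rw [hlyd]; abel
    have hba : ⁅b0, a⁆ = -⁅a, b0⁆ := by rw [← lie_skew]
    have hgen : ∀ (cx dx cy dy : F) (u w : L),
        ⁅cx • a + dx • b0 + u, cy • a + dy • b0 + w⁆ - (cx * dy - cy * dx) • ⁅a, b0⁆ =
          cx • ⁅a, w⁆ + dx • ⁅b0, w⁆ + cy • ⁅u, a⁆ + dy • ⁅u, b0⁆ + ⁅u, w⁆ := by
      intro cx dx cy dy u w
      simp only [lie_add, add_lie, smul_lie, lie_smul, lie_self, smul_zero, zero_add,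
        add_zero, hba, smul_neg, smul_smul]
      module
    have hexp := hgen (g x) (bet x) (g y) (bet y) lx ly
    rw [← hx, ← hy] at hexp
    rw [hexp]
    have m1 : ⁅a, ly⁆ ∈ lowerCentralSeries F L L 2 := hlie2 a ly hly
    have m2 : ⁅b0, ly⁆ ∈ lowerCentralSeries F L L 2 := hlie2 b0 ly hly
    have m3 : ⁅lx, a⁆ ∈ lowerCentralSeries F L L 2 := by
      have := neg_mem (hlie2 a lx hlx)
      rwa [lie_skew] at this
    have m4 : ⁅lx, b0⁆ ∈ lowerCentralSeries F L L 2 := by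
      have := neg_mem (hlie2 b0 lx hlx)
      rwa [lie_skew] at this
    have m5 : ⁅lx, ly⁆ ∈ lowerCentralSeries F L L 2 := hlie2 lx ly hly
    exact add_mem (add_mem (add_mem (add_mem (SMulMemClass.smul_mem _ m1)
      (SMulMemClass.smul_mem _ m2)) (SMulMemClass.smul_mem _ m3))
      (SMulMemClass.smul_mem _ m4)) m5
  -- ⁅a, b0⁆ ∉ L^2
  have hc3 : ⁅a, b0⁆ ∉ lowerCentralSeries F L L 2 := by
    intro hc
    have hle : lowerCentralSeries F L L 1 ≤ lowerCentralSeries F L L 2 := by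
      rw [show (1 : ℕ) = 0 + 1 from rfl, LieModule.lowerCentralSeries_succ, LieSubmodule.lie_le_iff]
      intro x _ m _
      have hsplit : ⁅x, m⁆ = (g x * bet m - g m * bet x) • ⁅a, b0⁆ +
          (⁅x, m⁆ - (g x * bet m - g m * bet x) • ⁅a, b0⁆) := by abel
      rw [hsplit]
      exact add_mem (SMulMemClass.smul_mem _ hc) (hbra x m)
    have hle' := (LieSubmodule.toSubmodule_le_toSubmodule _ _).mpr hle
    have := Submodule.finrank_mono hle'
    have hc1 : Module.finrank F
        ↥((lowerCentralSeries F L L 1 : LieSubmodule F L L).toSubmodule) = n - 2 := h1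
    have hc2 : Module.finrank F
        ↥((lowerCentralSeries F L L 2 : LieSubmodule F L L).toSubmodule) = n - 3 := h2
    omega
  -- the functional h
  have hc3' : ⁅a, b0⁆ ∉ (lowerCentralSeries F L L 2 : LieSubmodule F L L).toSubmodule :=
    fun h => hc3 ((LieSubmodule.mem_toSubmodule _).mp h)
  obtain ⟨h, hhc3, hh0⟩ := filiform_exists_functional hc3' (lam b0)
  have hkey : ∀ x y : L, h ⁅x, y⁆ = (g x * bet y - g y * bet x) * lam b0 := by
    intro x y
    have h0 : h (⁅x, y⁆ - (g x * bet y - g y * bet x) • ⁅a, b0⁆) = 0 :=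
      hh0 _ ((LieSubmodule.mem_toSubmodule _).mpr (hbra x y))
    rw [map_sub, map_smul, smul_eq_mul, hhc3, sub_eq_zero] at h0
    exact h0
  -- expansion of lam
  have hlamexp : ∀ y : L, lam y = g y * lam a + bet y * lam b0 := by
    intro y
    have hy : y = g y • a + bet y • b0 + (y - g y • a - bet y • b0) := by abel
    conv_lhs => rw [hy]
    rw [map_add, map_add, map_smul, map_smul, hlamN1 _ (hdecomp y), add_zero,
      smul_eq_mul, smul_eq_mul]
  have hscal : ∀ x y : L, (g x * bet y - g y * bet x) * lam b0 =
      g x * lam y - g y * lam x := by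
    intro x y
    rw [hlamexp x, hlamexp y]
    ring
  -- ⁅p, v⁆ in terms of lam
  have hpv : ∀ p : L, ⁅p, v⁆ = -(lam p • z) := by
    intro p
    rw [← lie_skew, hlam p]
  -- the derivation property for the perturbed maps
  have hmkD : ∀ g' : L →ₗ[F] F, (∀ w ∈ lowerCentralSeries F L L 1, g' w = 0) →
      ∀ p q : L, (g.smulRight v + (h + g').smulRight z) ⁅p, q⁆ =
        ⁅p, (g.smulRight v + (h + g').smulRight z) q⁆ -
        ⁅q, (g.smulRight v + (h + g').smulRight z) p⁆ := by
    intro g' hg' p q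
    simp only [LinearMap.add_apply, LinearMap.smulRight_apply]
    rw [hgN1 _ (hL1 p q), hg' _ (hL1 p q), zero_smul, zero_add, add_zero]
    rw [lie_add, lie_add, lie_smul, lie_smul, lie_smul, lie_smul,
      hcent p, hcent q, smul_zero, smul_zero, add_zero, add_zero]
    rw [hpv p, hpv q, hkey p q, hscal p q]
    module
  -- the local derivation Δ
  refine ⟨g.smulRight v, ?_, ?_⟩
  · intro x
    by_cases hgx : g x = 0
    · refine ⟨0, ?_⟩
      simp [hgx]
    · have hxN1 : x ∉ (lowerCentralSeries F L L 1 : LieSubmodule F L L).toSubmodule :=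
        fun hx => hgx (hgN1 x ((LieSubmodule.mem_toSubmodule _).mp hx))
      obtain ⟨g', hg'x, hg'0⟩ := filiform_exists_functional hxN1 (-h x)
      have hg'N1 : ∀ w ∈ lowerCentralSeries F L L 1, g' w = 0 := fun w hw =>
        hg'0 w ((LieSubmodule.mem_toSubmodule _).mpr hw)
      refine ⟨⟨g.smulRight v + (h + g').smulRight z, hmkD g' hg'N1⟩, ?_⟩
      show g.smulRight v x = (g.smulRight v + (h + g').smulRight z) x
      simp only [LinearMap.add_apply, LinearMap.smulRight_apply]
      rw [hg'x, add_neg_cancel, zero_smul, add_zero]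
  · intro hfalse
    have hcontra := hfalse a b0
    simp only [LinearMap.smulRight_apply] at hcontra
    simp only [hgN1 _ (hL1 a b0), hga, hgb0, zero_smul, one_smul, lie_zero,
      add_zero] at hcontra
    exact hvb0 hcontra.symm
end

section
/- Let F be an algebraically closed field of characteristic zero and let L be an n-dimensional filiform Lie algebra over F with n ≥ 4, equipped with a basis e_1, …, e_n satisfying [e_1, e_i] = e_{i+1} for all 2 ≤ i ≤ n−1. For α, β ∈ F define the linear operator D on L by D(Σ_{k=1}^n x_k e_k) = α x_2 e_{n−1} + β x_3 e_n. Then D is a derivation of L if and only if α = β. -/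
section Aux

variable {F : Type*} [Field F] {L : Type*} [LieRing L] [LieAlgebra F L]
  {n : ℕ} (hn : 3 < n) (b : Module.Basis (Fin n) F L)
  (hb : ∀ i : ℕ, ∀ h1 : 1 ≤ i, ∀ h2 : i ≤ n - 2,
      ⁅b ⟨0, by omega⟩, b ⟨i, by omega⟩⁆ = b ⟨i + 1, by omega⟩)
  (hfil : ∀ k : ℕ, 1 ≤ k → k ≤ n - 1 →
      Module.finrank F ↥(LieModule.lowerCentralSeries F L L k) = n - k - 1)

set_option maxHeartbeats 1000000

include hn hb in
lemma filiform_aux_hE : ∀ k : ℕ, 1 ≤ k → ∀ i : Fin n, k + 1 ≤ i.val →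
      b i ∈ LieModule.lowerCentralSeries F L L k := by
  intro k
  induction k with
  | zero => omega
  | succ m ih =>
    intro _ i hi
    have him : i.val ≤ n - 1 := by omega
    have hmem : b ⟨i.val - 1, by omega⟩ ∈ LieModule.lowerCentralSeries F L L m := by
      rcases Nat.eq_zero_or_pos m with hm | hm
      · subst hm; rw [LieModule.lowerCentralSeries_zero]; exact LieSubmodule.mem_top _
      · exact ih hm ⟨i.val - 1, by omega⟩ (by show m + 1 ≤ i.val - 1; omega)
    have hbr := hb (i.val - 1) (by omega) (by omega)
    have hieq : (⟨i.val - 1 + 1, by omega⟩ : Fin n) = i := by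
      apply Fin.ext; show i.val - 1 + 1 = i.val; omega
    rw [hieq] at hbr
    rw [LieModule.lowerCentralSeries_succ, ← hbr]
    exact LieSubmodule.lie_mem_lie (LieSubmodule.mem_top _) hmem

include hn hb hfil in
lemma filiform_aux_hcoord : ∀ k : ℕ, 1 ≤ k → k ≤ n - 1 → ∀ z : L,
      z ∈ LieModule.lowerCentralSeries F L L k → ∀ i : Fin n, i.val ≤ k → b.repr z i = 0 := by
  classical
  haveI : FiniteDimensional F L := Module.Finite.of_basis b
  have hE := filiform_aux_hE hn b hb
  intro k hk1 hk2 z hz i hi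
  have hle : Submodule.span F (b '' {j : Fin n | k + 1 ≤ j.val}) ≤
      (LieModule.lowerCentralSeries F L L k : Submodule F L) := by
    rw [Submodule.span_le]
    rintro _ ⟨j, hj, rfl⟩
    exact hE k hk1 j hj
  have hcard : ({j : Fin n | k + 1 ≤ j.val}).toFinset.card = n - k - 1 := by
    rw [← Finset.card_range (n - k - 1)]
    refine Finset.card_bij' (fun j _ => j.val - (k + 1))
      (fun m hm => ⟨m + (k + 1), by simp only [Finset.mem_range] at hm; omega⟩)
      ?_ ?_ ?_ ?_
    · intro a ha
      simp only [Set.mem_toFinset, Set.mem_setOf_eq] at ha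
      simp only [Finset.mem_range]
      omega
    · intro m hm
      simp only [Finset.mem_range] at hm
      simp only [Set.mem_toFinset, Set.mem_setOf_eq]
      omega
    · intro a ha
      simp only [Set.mem_toFinset, Set.mem_setOf_eq] at ha
      apply Fin.ext
      show a.val - (k + 1) + (k + 1) = a.val
      omega
    · intro m hm
      simp only [Finset.mem_range] at hm
      show m + (k + 1) - (k + 1) = m
      omega
  haveI : Fintype ((b '' {j : Fin n | k + 1 ≤ j.val}) : Set L) := ((Set.toFinite _).image b).fintype
  have hli : LinearIndependent F ((↑) : (b '' {j : Fin n | k + 1 ≤ j.val}) → L) :=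
    ((linearIndepOn_id_range_iff b.injective).2 b.linearIndependent).mono (Set.image_subset_range b _)
  have hfr : Module.finrank F (Submodule.span F (b '' {j : Fin n | k + 1 ≤ j.val}))
      = n - k - 1 := by
    rw [finrank_span_set_eq_card hli, Set.toFinset_image,
      Finset.card_image_of_injective _ b.injective, hcard]
  have hfin2 : Module.finrank F ((LieModule.lowerCentralSeries F L L k : LieSubmodule F L L) : Submodule F L) = n - k - 1 := hfil k hk1 hk2
  have heq := Submodule.eq_of_le_of_finrank_le hle (by rw [hfin2, hfr])
  have hz' : z ∈ Submodule.span F (b '' {j : Fin n | k + 1 ≤ j.val}) := by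
    rw [heq]; exact hz
  rw [Module.Basis.mem_span_image] at hz'
  by_contra h
  have hsup : i ∈ (b.repr z).support := Finsupp.mem_support_iff.2 h
  have := hz' hsup
  simp only [Set.mem_setOf_eq] at this
  omega

lemma filiform_aux_mem_succ : ∀ (k : ℕ) (x z : L), z ∈ LieModule.lowerCentralSeries F L L k →
      ⁅x, z⁆ ∈ LieModule.lowerCentralSeries F L L (k + 1) := by
  intro k x z hz
  rw [LieModule.lowerCentralSeries_succ]
  exact LieSubmodule.lie_mem_lie (LieSubmodule.mem_top _) hz

include hn hb hfil in
lemma filiform_aux_hZ' : ∀ (x z : L), z ∈ LieModule.lowerCentralSeries F L L (n - 2) → ⁅x, z⁆ = 0 := by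
  have hcoord := filiform_aux_hcoord hn b hb hfil
  have mem_succ := filiform_aux_mem_succ (F := F) (L := L)
  intro x z hz
  have hm : ⁅x, z⁆ ∈ LieModule.lowerCentralSeries F L L (n - 1) := by
    have := mem_succ (n - 2) x z hz
    rwa [show n - 2 + 1 = n - 1 by omega] at this
  have hco : ∀ i : Fin n, b.repr ⁅x, z⁆ i = 0 := fun i =>
    hcoord (n - 1) (by omega) le_rfl _ hm i (by omega)
  have : b.repr ⁅x, z⁆ = 0 := Finsupp.ext hco
  exact b.repr.map_eq_zero_iff.mp this

include hn hb hfil in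
lemma filiform_aux_hZ : ∀ x : L, ⁅x, b (⟨n - 1, by omega⟩ : Fin n)⁆ = 0 := by
  have hZ' := filiform_aux_hZ' hn b hb hfil
  have hbN1mem : b (⟨n - 1, by omega⟩ : Fin n) ∈ LieModule.lowerCentralSeries F L L (n - 2) :=
    filiform_aux_hE hn b hb (n - 2) (by omega) _ (by show n - 2 + 1 ≤ n - 1; omega)
  exact fun x => hZ' x _ hbN1mem

include hn hb in
lemma filiform_aux_hb0N2 : ⁅b (⟨0, by omega⟩ : Fin n), b (⟨n - 2, by omega⟩ : Fin n)⁆ = b (⟨n - 1, by omega⟩ : Fin n) := by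
  have hbr := hb (n - 2) (by omega) le_rfl
  have hieq : (⟨n - 2 + 1, by omega⟩ : Fin n) = (⟨n - 1, by omega⟩ : Fin n) := by
    apply Fin.ext; show n - 2 + 1 = n - 1; omega
  rw [hieq] at hbr
  exact hbr

include hn hb hfil in
lemma filiform_aux_hC : ∀ i : Fin n, 2 ≤ i.val → ⁅b i, b (⟨n - 2, by omega⟩ : Fin n)⁆ = 0 := by
  have hZ' := filiform_aux_hZ' hn b hb hfil
  have hZ := filiform_aux_hZ hn b hb hfil
  have hb0N2 := filiform_aux_hb0N2 hn b hb
  have mem_succ := filiform_aux_mem_succ (F := F) (L := L)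
  have hbN2mem : b (⟨n - 2, by omega⟩ : Fin n) ∈ LieModule.lowerCentralSeries F L L (n - 3) :=
    filiform_aux_hE hn b hb (n - 3) (by omega) _ (by show n - 3 + 1 ≤ n - 2; omega)
  intro i hi
  have him : i.val ≤ n - 1 := by omega
  have hbr := hb (i.val - 1) (by omega) (by omega)
  have hieq : (⟨i.val - 1 + 1, by omega⟩ : Fin n) = i := by
    apply Fin.ext; show i.val - 1 + 1 = i.val; omega
  rw [hieq] at hbr
  rw [← hbr, lie_lie]
  have h1 : ⁅b ⟨i.val - 1, by omega⟩, b (⟨n - 2, by omega⟩ : Fin n)⁆ ∈ LieModule.lowerCentralSeries F L L (n - 2) := by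
    have h1' := mem_succ (n - 3) (b ⟨i.val - 1, by omega⟩) (b (⟨n - 2, by omega⟩ : Fin n)) hbN2mem
    rwa [show n - 3 + 1 = n - 2 by omega] at h1'
  rw [hZ' _ _ h1, hb0N2, hZ]
  simp

include hn hb in
lemma filiform_aux_hK2 : ∀ i j : Fin n, 1 ≤ i.val → 1 ≤ j.val →
      ⁅b i, b j⁆ ∈ LieModule.lowerCentralSeries F L L 2 := by
  have hE := filiform_aux_hE hn b hb
  have mem_succ := filiform_aux_mem_succ (F := F) (L := L)
  intro i j hi hj
  rcases Nat.lt_or_ge j.val 2 with hj2 | hj2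
  · rcases Nat.lt_or_ge i.val 2 with hi2 | hi2
    · have hij : i = j := Fin.ext (by omega)
      rw [hij, lie_self]
      exact (LieModule.lowerCentralSeries F L L 2).zero_mem
    · have hsk : ⁅b i, b j⁆ = -⁅b j, b i⁆ := (lie_skew _ _).symm
      rw [hsk]
      exact neg_mem (mem_succ 1 _ _ (hE 1 le_rfl i (by omega)))
  · exact mem_succ 1 _ _ (hE 1 le_rfl j (by omega))

set_option maxHeartbeats 8000000 in
include hn hb hfil in
lemma filiform_aux_key (α : F) (D : L →ₗ[F] L)
    (hD : ∀ x : L,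
      D x = (α * b.repr x ⟨1, by omega⟩) • b ⟨n - 2, by omega⟩
          + (α * b.repr x ⟨2, by omega⟩) • b ⟨n - 1, by omega⟩) :
    ∀ i j : Fin n, D ⁅b i, b j⁆ = ⁅D (b i), b j⁆ + ⁅b i, D (b j)⁆ := by
  have hcoord := filiform_aux_hcoord hn b hb hfil
  have hZ := filiform_aux_hZ hn b hb hfil
  have hb0N2 := filiform_aux_hb0N2 hn b hb
  have hC := filiform_aux_hC hn b hb hfil
  have hK2 := filiform_aux_hK2 hn b hb
  have mem_succ := filiform_aux_mem_succ (F := F) (L := L)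
  have mem1 : ∀ x y : L, ⁅x, y⁆ ∈ LieModule.lowerCentralSeries F L L 1 := by
    intro x y
    exact mem_succ 0 x y (by rw [LieModule.lowerCentralSeries_zero]; exact LieSubmodule.mem_top _)
  have hb01 : ⁅b (⟨0, by omega⟩ : Fin n), b (⟨1, by omega⟩ : Fin n)⁆ = b (⟨2, by omega⟩ : Fin n) := by
    have hbr := hb 1 le_rfl (by omega)
    exact hbr
  have hD0 : ∀ j : Fin n, j.val ≠ 1 → j.val ≠ 2 → D (b j) = 0 := by
    intro j h1 h2
    rw [hD (b j), b.repr_self]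
    have e1 : (Finsupp.single j (1 : F)) (⟨1, by omega⟩ : Fin n) = 0 :=
      Finsupp.single_eq_of_ne' (by simp only [ne_eq, Fin.ext_iff]; exact h1)
    have e2 : (Finsupp.single j (1 : F)) (⟨2, by omega⟩ : Fin n) = 0 :=
      Finsupp.single_eq_of_ne' (by simp only [ne_eq, Fin.ext_iff]; exact h2)
    rw [e1, e2]
    simp
  have hDb1 : D (b (⟨1, by omega⟩ : Fin n)) = α • b (⟨n - 2, by omega⟩ : Fin n) := by
    rw [hD (b (⟨1, by omega⟩ : Fin n)), b.repr_self]
    have e1 : (Finsupp.single (⟨1, by omega⟩ : Fin n) (1 : F)) (⟨1, by omega⟩ : Fin n) = 1 := Finsupp.single_eq_same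
    have e2 : (Finsupp.single (⟨1, by omega⟩ : Fin n) (1 : F)) (⟨2, by omega⟩ : Fin n) = 0 :=
      Finsupp.single_eq_of_ne' (by simp only [ne_eq, Fin.mk.injEq]; omega)
    rw [e1, e2]
    simp
  have hDb2 : D (b (⟨2, by omega⟩ : Fin n)) = α • b (⟨n - 1, by omega⟩ : Fin n) := by
    rw [hD (b (⟨2, by omega⟩ : Fin n)), b.repr_self]
    have e1 : (Finsupp.single (⟨2, by omega⟩ : Fin n) (1 : F)) (⟨1, by omega⟩ : Fin n) = 0 :=
      Finsupp.single_eq_of_ne' (by simp only [ne_eq, Fin.mk.injEq]; omega)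
    have e2 : (Finsupp.single (⟨2, by omega⟩ : Fin n) (1 : F)) (⟨2, by omega⟩ : Fin n) = 1 := Finsupp.single_eq_same
    rw [e1, e2]
    simp
  have hDbr : ∀ w : L, w ∈ LieModule.lowerCentralSeries F L L 1 →
      D w = (α * b.repr w (⟨2, by omega⟩ : Fin n)) • b (⟨n - 1, by omega⟩ : Fin n) := by
    intro w hw
    rw [hD w]
    rw [hcoord 1 le_rfl (by omega) w hw (⟨1, by omega⟩ : Fin n) (by show (1:ℕ) ≤ 1; omega)]
    simp
  have hDbr2 : ∀ i j : Fin n, 1 ≤ i.val → 1 ≤ j.val → D ⁅b i, b j⁆ = 0 := by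
    intro i j hi hj
    rw [hDbr _ (mem1 _ _),
      hcoord 2 (by omega) (by omega) _ (hK2 i j hi hj) (⟨2, by omega⟩ : Fin n) (by show (2:ℕ) ≤ 2; omega)]
    simp
  intro i j
  by_cases hi0' : i.val = 0
  · have hii : i = (⟨0, by omega⟩ : Fin n) := Fin.ext hi0'
    rw [hii]
    rw [hD0 (⟨0, by omega⟩ : Fin n) (by show (0:ℕ) ≠ 1; omega) (by show (0:ℕ) ≠ 2; omega), zero_lie, zero_add]
    by_cases hj1 : j.val = 1
    · have hjj : j = (⟨1, by omega⟩ : Fin n) := Fin.ext hj1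
      rw [hjj]
      rw [hb01, hDb2, hDb1, lie_smul, hb0N2]
    · by_cases hj2 : j.val = 2
      · have hjj : j = (⟨2, by omega⟩ : Fin n) := Fin.ext hj2
        rw [hjj]
        rw [hDb2, lie_smul, hZ, smul_zero]
        by_cases h22 : (2 : ℕ) ≤ n - 2
        · have hbr := hb 2 (by omega) h22
          rw [hbr]
          exact hD0 _ (by show (2+1:ℕ) ≠ 1; omega) (by show (2+1:ℕ) ≠ 2; omega)
        · -- n = 4 : (⟨2, by omega⟩ : Fin n) = (⟨n - 2, by omega⟩ : Fin n)
          have : (⟨2, by omega⟩ : Fin n) = (⟨n - 2, by omega⟩ : Fin n) := Fin.ext (by show 2 = n - 2; omega)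
          rw [this, hb0N2]
          exact hD0 _ (by show n - 1 ≠ 1; omega) (by show n - 1 ≠ 2; omega)
      · by_cases hj0 : j.val = 0
        · have hjj : j = (⟨0, by omega⟩ : Fin n) := Fin.ext hj0
          rw [hjj]
          rw [lie_self, hD0 (⟨0, by omega⟩ : Fin n) (by show (0:ℕ) ≠ 1; omega) (by show (0:ℕ) ≠ 2; omega), lie_zero, map_zero]
        · rw [hD0 j hj1 hj2, lie_zero]
          by_cases hjN1 : j.val = n - 1
          · have hjj : j = (⟨n - 1, by omega⟩ : Fin n) := Fin.ext hjN1
            rw [hjj]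
            rw [hZ, map_zero]
          · have hbr := hb j.val (by omega) (by omega)
            have hjeq : (⟨j.val, by omega⟩ : Fin n) = j := Fin.ext rfl
            rw [hjeq] at hbr
            rw [hbr]
            exact hD0 _ (by show j.val + 1 ≠ 1; omega) (by show j.val + 1 ≠ 2; omega)
  · -- i.val ≥ 1
    have hi1' : 1 ≤ i.val := by omega
    by_cases hj0 : j.val = 0
    · -- use antisymmetry to move to the previous case... direct computation
      have hjj : j = (⟨0, by omega⟩ : Fin n) := Fin.ext hj0
      rw [hjj]
      rw [show ⁅b i, b (⟨0, by omega⟩ : Fin n)⁆ = -⁅b (⟨0, by omega⟩ : Fin n), b i⁆ from (lie_skew _ _).symm, map_neg]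
      rw [show ⁅b i, D (b (⟨0, by omega⟩ : Fin n))⁆ = -⁅D (b (⟨0, by omega⟩ : Fin n)), b i⁆ from (lie_skew _ _).symm]
      rw [show ⁅D (b i), b (⟨0, by omega⟩ : Fin n)⁆ = -⁅b (⟨0, by omega⟩ : Fin n), D (b i)⁆ from (lie_skew _ _).symm]
      rw [hD0 (⟨0, by omega⟩ : Fin n) (by show (0:ℕ) ≠ 1; omega) (by show (0:ℕ) ≠ 2; omega)]
      simp only [lie_zero, zero_lie, neg_zero, add_zero, zero_add]
      -- goal: -D ⁅b (⟨0, by omega⟩ : Fin n), b i⁆ = -⁅b (⟨0, by omega⟩ : Fin n), D (b i)⁆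
      congr 1
      by_cases hi1'' : i.val = 1
      · have hii : i = (⟨1, by omega⟩ : Fin n) := Fin.ext hi1''
        rw [hii]
        rw [hb01, hDb2, hDb1, lie_smul, hb0N2]
      · by_cases hi2'' : i.val = 2
        · have hii : i = (⟨2, by omega⟩ : Fin n) := Fin.ext hi2''
          rw [hii]
          rw [hDb2, lie_smul, hZ, smul_zero]
          by_cases h22 : (2 : ℕ) ≤ n - 2
          · have hbr := hb 2 (by omega) h22
            rw [hbr]
            exact hD0 _ (by show (2+1:ℕ) ≠ 1; omega) (by show (2+1:ℕ) ≠ 2; omega)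
          · have : (⟨2, by omega⟩ : Fin n) = (⟨n - 2, by omega⟩ : Fin n) := Fin.ext (by show 2 = n - 2; omega)
            rw [this, hb0N2]
            exact hD0 _ (by show n - 1 ≠ 1; omega) (by show n - 1 ≠ 2; omega)
        · rw [hD0 i hi1'' hi2'', lie_zero]
          by_cases hiN1 : i.val = n - 1
          · have hii : i = (⟨n - 1, by omega⟩ : Fin n) := Fin.ext hiN1
            rw [hii]
            rw [hZ, map_zero]
          · have hbr := hb i.val (by omega) (by omega)
            have hieq : (⟨i.val, by omega⟩ : Fin n) = i := Fin.ext rfl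
            rw [hieq] at hbr
            rw [hbr]
            exact hD0 _ (by show i.val + 1 ≠ 1; omega) (by show i.val + 1 ≠ 2; omega)
    · -- both i, j ≥ 1 : LHS = 0
      have hj1' : 1 ≤ j.val := by omega
      rw [hDbr2 i j hi1' hj1']
      by_cases hij11 : i.val = 1 ∧ j.val = 1
      · have hii : i = (⟨1, by omega⟩ : Fin n) := Fin.ext hij11.1
        have hjj : j = (⟨1, by omega⟩ : Fin n) := Fin.ext hij11.2
        rw [hii, hjj]
        rw [hDb1, lie_smul, smul_lie,
          show ⁅b (⟨n - 2, by omega⟩ : Fin n), b (⟨1, by omega⟩ : Fin n)⁆ = -⁅b (⟨1, by omega⟩ : Fin n), b (⟨n - 2, by omega⟩ : Fin n)⁆ from (lie_skew _ _).symm,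
          smul_neg, neg_add_cancel]
      push_neg at hij11
      have hRi : ⁅D (b i), b j⁆ = 0 := by
        by_cases hi1'' : i.val = 1
        · have hii : i = (⟨1, by omega⟩ : Fin n) := Fin.ext hi1''
          rw [hii]
          rw [hDb1, smul_lie]
          rw [show ⁅b (⟨n - 2, by omega⟩ : Fin n), b j⁆ = -⁅b j, b (⟨n - 2, by omega⟩ : Fin n)⁆ from (lie_skew _ _).symm]
          have hjne : j.val ≠ 1 := hij11 hi1''
          rw [hC j (by omega), neg_zero, smul_zero]
        · by_cases hi2'' : i.val = 2
          · have hii : i = (⟨2, by omega⟩ : Fin n) := Fin.ext hi2''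
            rw [hii]
            rw [hDb2, smul_lie,
              show ⁅b (⟨n - 1, by omega⟩ : Fin n), b j⁆ = -⁅b j, b (⟨n - 1, by omega⟩ : Fin n)⁆ from (lie_skew _ _).symm, hZ,
              neg_zero, smul_zero]
          · rw [hD0 i hi1'' hi2'', zero_lie]
      have hRj : ⁅b i, D (b j)⁆ = 0 := by
        by_cases hj1'' : j.val = 1
        · have hjj : j = (⟨1, by omega⟩ : Fin n) := Fin.ext hj1''
          rw [hjj]
          rw [hDb1, lie_smul]
          have hine : i.val ≠ 1 := fun h => (hij11 h) hj1''
          rw [hC i (by omega), smul_zero]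
        · by_cases hj2'' : j.val = 2
          · have hjj : j = (⟨2, by omega⟩ : Fin n) := Fin.ext hj2''
            rw [hjj]
            rw [hDb2, lie_smul, hZ, smul_zero]
          · rw [hD0 j hj1'' hj2'', lie_zero]
      rw [hRi, hRj, add_zero]

end Aux

set_option maxHeartbeats 1000000 in
/-- Let `L` be an `n`-dimensional filiform Lie algebra (`n ≥ 4`) over an algebraically
closed field of characteristic zero, with a basis `e₁, …, eₙ` (here indexed by `Fin n`,
so `e_k = b ⟨k-1, _⟩`) satisfying `⁅e₁, eᵢ⁆ = e_{i+1}` for `2 ≤ i ≤ n - 1`. For scalars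
`α, β` the linear operator `D (Σ x_k e_k) = α x₂ e_{n-1} + β x₃ eₙ` is a derivation of
`L` if and only if `α = β`. -/
theorem filiform_operator_is_derivation_iff
    (F : Type*) [Field F] [IsAlgClosed F] [CharZero F]
    (L : Type*) [LieRing L] [LieAlgebra F L]
    (n : ℕ) (hn : 4 ≤ n)
    (hfil : ∀ k : ℕ, 1 ≤ k → k ≤ n - 1 →
      Module.finrank F ↥(LieModule.lowerCentralSeries F L L k) = n - k - 1)
    (b : Module.Basis (Fin n) F L)
    (hb : ∀ i : ℕ, ∀ h1 : 1 ≤ i, ∀ h2 : i ≤ n - 2,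
      ⁅b ⟨0, by omega⟩, b ⟨i, by omega⟩⁆ = b ⟨i + 1, by omega⟩)
    (α β : F)
    (D : L →ₗ[F] L)
    (hD : ∀ x : L,
      D x = (α * b.repr x ⟨1, by omega⟩) • b ⟨n - 2, by omega⟩
          + (β * b.repr x ⟨2, by omega⟩) • b ⟨n - 1, by omega⟩) :
    (∀ x y : L, D ⁅x, y⁆ = ⁅D x, y⁆ + ⁅x, D y⁆) ↔ α = β := by
  classical
  constructor
  · -- derivation → α = β
    have hb01 : ⁅b (⟨0, by omega⟩ : Fin n), b (⟨1, by omega⟩ : Fin n)⁆ = b (⟨2, by omega⟩ : Fin n) := by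
      have hbr := hb 1 le_rfl (by omega)
      exact hbr
    have hb0N2 := filiform_aux_hb0N2 hn b hb
    have hD0 : D (b (⟨0, by omega⟩ : Fin n)) = 0 := by
      rw [hD (b (⟨0, by omega⟩ : Fin n)), b.repr_self]
      have e1 : (Finsupp.single (⟨0, by omega⟩ : Fin n) (1 : F)) (⟨1, by omega⟩ : Fin n) = 0 :=
        Finsupp.single_eq_of_ne' (by simp only [ne_eq, Fin.mk.injEq]; omega)
      have e2 : (Finsupp.single (⟨0, by omega⟩ : Fin n) (1 : F)) (⟨2, by omega⟩ : Fin n) = 0 :=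
        Finsupp.single_eq_of_ne' (by simp only [ne_eq, Fin.mk.injEq]; omega)
      rw [e1, e2]
      simp
    have hDb1 : D (b (⟨1, by omega⟩ : Fin n)) = α • b (⟨n - 2, by omega⟩ : Fin n) := by
      rw [hD (b (⟨1, by omega⟩ : Fin n)), b.repr_self]
      have e1 : (Finsupp.single (⟨1, by omega⟩ : Fin n) (1 : F)) (⟨1, by omega⟩ : Fin n) = 1 := Finsupp.single_eq_same
      have e2 : (Finsupp.single (⟨1, by omega⟩ : Fin n) (1 : F)) (⟨2, by omega⟩ : Fin n) = 0 :=
        Finsupp.single_eq_of_ne' (by simp only [ne_eq, Fin.mk.injEq]; omega)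
      rw [e1, e2]
      simp
    have hDb2 : D (b (⟨2, by omega⟩ : Fin n)) = β • b (⟨n - 1, by omega⟩ : Fin n) := by
      rw [hD (b (⟨2, by omega⟩ : Fin n)), b.repr_self]
      have e1 : (Finsupp.single (⟨2, by omega⟩ : Fin n) (1 : F)) (⟨1, by omega⟩ : Fin n) = 0 :=
        Finsupp.single_eq_of_ne' (by simp only [ne_eq, Fin.mk.injEq]; omega)
      have e2 : (Finsupp.single (⟨2, by omega⟩ : Fin n) (1 : F)) (⟨2, by omega⟩ : Fin n) = 1 := Finsupp.single_eq_same
      rw [e1, e2]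
      simp

    intro hder
    have h := hder (b (⟨0, by omega⟩ : Fin n)) (b (⟨1, by omega⟩ : Fin n))
    rw [hb01, hDb2, hD0, hDb1] at h
    rw [zero_lie, lie_smul, hb0N2, zero_add] at h
    have h' : (β - α) • b (⟨n - 1, by omega⟩ : Fin n) = 0 := by rw [sub_smul, h]; simp
    rcases smul_eq_zero.mp h' with h'' | h''
    · exact (sub_eq_zero.mp h'').symm
    · exact absurd h'' (b.ne_zero _)
  · -- α = β → derivation
    intro hab
    subst hab
    have key := filiform_aux_key hn b hb hfil α D hD
    intro x y
    let B1 : L →ₗ[F] L →ₗ[F] L := LinearMap.mk₂ F (fun x y => D ⁅x, y⁆)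
      (fun m₁ m₂ m => by simp only [add_lie, map_add]) (fun c m₁ m => by simp only [smul_lie, map_smul])
      (fun m m₁ m₂ => by simp only [lie_add, map_add]) (fun c m m₁ => by simp only [lie_smul, map_smul])
    let B2 : L →ₗ[F] L →ₗ[F] L := LinearMap.mk₂ F (fun x y => ⁅D x, y⁆ + ⁅x, D y⁆)
      (fun m₁ m₂ m => by simp only [map_add, add_lie]; abel)
      (fun c m₁ m => by simp only [map_smul, smul_lie, smul_add])
      (fun m m₁ m₂ => by simp only [map_add, lie_add]; abel)
      (fun c m m₁ => by simp only [map_smul, lie_smul, smul_add])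
    have hBB : B1 = B2 := LinearMap.ext_basis b b (fun i j => by
      simpa [B1, B2, LinearMap.mk₂_apply] using key i j)
    have := LinearMap.congr_fun (LinearMap.congr_fun hBB x) y
    simpa [B1, B2, LinearMap.mk₂_apply] using this
end

section
/- Let F be a field of characteristic zero and let L be the three-dimensional Heisenberg Lie algebra over F, with basis e_1, e_2, e_3 and multiplication [e_1, e_2] = e_3 (all other brackets of basis elements equal to zero). Then the linear operator Δ defined by Δ(x_1 e_1 + x_2 e_2 + x_3 e_3) = 2 x_2 e_2 + x_3 e_3 is a local derivation on L which is not a derivation. -/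
section Aux

variable {F : Type*} [Field F] {L : Type*} [LieRing L] [LieAlgebra F L]
  (b : Module.Basis (Fin 3) F L)
  (h12 : ⁅b 0, b 1⁆ = b 2)
  (h13 : ⁅b 0, b 2⁆ = 0)
  (h23 : ⁅b 1, b 2⁆ = 0)

include h12 h13 h23 in
lemma heis_bracket_formula (x y : L) :
    ⁅x, y⁆ = (b.repr x 0 * b.repr y 1 - b.repr x 1 * b.repr y 0) • b 2 := by
  have h21 : ⁅b 1, b 0⁆ = -b 2 := by rw [← lie_skew, h12]
  have h31 : ⁅b 2, b 0⁆ = 0 := by rw [← lie_skew, h13, neg_zero]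
  have h32 : ⁅b 2, b 1⁆ = 0 := by rw [← lie_skew, h23, neg_zero]
  conv_lhs => rw [← b.sum_repr x, ← b.sum_repr y]
  simp only [Fin.sum_univ_three, add_lie, lie_add, smul_lie, lie_smul, h12, h13, h23,
    h21, h31, h32, lie_self, smul_zero, add_zero, zero_add, smul_neg, smul_smul, sub_smul]
  module

/-- A derivation of the Heisenberg algebra given by matrix entries. -/
noncomputable def heisDer (a c d p q : F) : L →ₗ[F] L where
  toFun x := (a * b.repr x 0) • b 0 + (c * b.repr x 0 + d * b.repr x 1) • b 1 +
      (p * b.repr x 0 + q * b.repr x 1 + (a + d) * b.repr x 2) • b 2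
  map_add' x y := by
    simp only [map_add, Finsupp.add_apply]
    module
  map_smul' t x := by
    simp only [map_smul, Finsupp.smul_apply, smul_eq_mul, RingHom.id_apply]
    module

include h12 h13 h23 in
lemma heisDer_leibniz (a c d p q : F) (x y : L) :
    heisDer b a c d p q ⁅x, y⁆ =
      ⁅x, heisDer b a c d p q y⁆ - ⁅y, heisDer b a c d p q x⁆ := by
  have key := heis_bracket_formula b h12 h13 h23 x y
  have r0 : b.repr ⁅x, y⁆ 0 = 0 := by
    rw [key]; simp [Finsupp.single_apply]
  have r1 : b.repr ⁅x, y⁆ 1 = 0 := by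
    rw [key]; simp [Finsupp.single_apply]
  have r2 : b.repr ⁅x, y⁆ 2 = b.repr x 0 * b.repr y 1 - b.repr x 1 * b.repr y 0 := by
    rw [key]; simp [Finsupp.single_apply]
  have reprD : ∀ z : L, (b.repr (heisDer b (L := L) a c d p q z) 0 = a * b.repr z 0) ∧
      (b.repr (heisDer b (L := L) a c d p q z) 1 = c * b.repr z 0 + d * b.repr z 1) := by
    intro z
    constructor <;>
    · show b.repr (_ • b 0 + _ • b 1 + _ • b 2) _ = _
      simp [Finsupp.single_apply]
  rw [heis_bracket_formula b h12 h13 h23 x (heisDer b a c d p q y),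
    heis_bracket_formula b h12 h13 h23 y (heisDer b a c d p q x)]
  rw [(reprD x).1, (reprD x).2, (reprD y).1, (reprD y).2]
  show (_ : F) • b 0 + (_ : F) • b 1 + (_ : F) • b 2 = _
  rw [r0, r1, r2]
  match_scalars <;> ring

include h12 h13 h23 in
/-- The Lie derivation. -/
noncomputable def heisLieDer (a c d p q : F) : LieDerivation F L L :=
  { heisDer b a c d p q with
    leibniz' := heisDer_leibniz b h12 h13 h23 a c d p q }

end Aux

/-- Let `L` be the three-dimensional Heisenberg Lie algebra over a field `F` of
characteristic zero, with basis `e₁, e₂, e₃` whose only nontrivial bracket is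
`⁅e₁, e₂⁆ = e₃`. Then the linear operator
`Δ (x₁ e₁ + x₂ e₂ + x₃ e₃) = 2 x₂ e₂ + x₃ e₃` is a local derivation on `L` which is
not a derivation. -/
theorem heisenberg_local_derivation_not_derivation
    (F : Type*) [Field F] [CharZero F]
    (L : Type*) [LieRing L] [LieAlgebra F L]
    (b : Module.Basis (Fin 3) F L)
    (h12 : ⁅b 0, b 1⁆ = b 2)
    (h13 : ⁅b 0, b 2⁆ = 0)
    (h23 : ⁅b 1, b 2⁆ = 0)
    (Δ : L →ₗ[F] L)
    (hΔ : ∀ x : L, Δ x = (2 * b.repr x 1) • b 1 + (b.repr x 2) • b 2) :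
    (∀ x : L, ∃ D : LieDerivation F L L, Δ x = D x) ∧
    ¬ (∀ x y : L, Δ ⁅x, y⁆ = ⁅Δ x, y⁆ + ⁅x, Δ y⁆) := by
  constructor
  · intro x
    by_cases h0 : b.repr x 0 = 0
    · refine ⟨heisLieDer b h12 h13 h23 (-1) 0 2 0 0, ?_⟩
      rw [hΔ x]
      show _ = (_ : F) • b 0 + (_ : F) • b 1 + (_ : F) • b 2
      rw [h0]
      module
    · refine ⟨heisLieDer b h12 h13 h23 0 (b.repr x 1 / b.repr x 0) 1 0 0, ?_⟩
      rw [hΔ x]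
      show _ = (_ : F) • b 0 + (_ : F) • b 1 + (_ : F) • b 2
      rw [div_mul_cancel₀ _ h0]
      module
  · intro hder
    have h := hder (b 0) (b 1)
    rw [h12, hΔ (b 2), hΔ (b 0), hΔ (b 1)] at h
    simp only [Module.Basis.repr_self, Finsupp.single_apply, lie_smul, h12] at h
    norm_num at h
    have : b 2 = (2:F) • b 2 := by simpa [h12] using h
    have h2 : ((2:F) - 1) • b 2 = 0 := by
      rw [sub_smul, one_smul, ← this, sub_self]
    have := b.ne_zero 2
    rw [smul_eq_zero] at h2
    rcases h2 with h2 | h2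
    · norm_num at h2
    · exact this h2
end
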